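/- Let (θ,ρ) ∈ ℝ^{2d}, h > 0, R ≥ 1, M ∈ ℕ, and (B,ℓ,a,b,L) ∈ D, and set B* = B*(L,a,b,B). Then the no-U-turn orbit selection distribution satisfies P(a, b, ℓ | θ, ρ, B, h, R) = P(a−L, b−L, ℓ | Φ_{h/R}^{RL}(θ,ρ), B*, h, R); that is, (ℓ = ℓ_min(θ,ρ,B,h,R) and a = a_ℓ(B) and b = b_ℓ(B)) holds if and only if (ℓ = ℓ_min(Φ_{h/R}^{RL}(θ,ρ),B*,h,R) and a−L = a_ℓ(B*) and b−L = b_ℓ(B*)). -/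

import Mathlib

open MeasureTheory

noncomputable section

/-! ### Combinatorial definitions for NUTS orbit selection -/

/-- Floor midpoint `⌊(a+b)/2⌋`. -/
def mid (a b : ℤ) : ℤ := (a + b) / 2

/-- `(−1)^x` for a bit `x`. -/
def signBit (x : Bool) : ℤ := if x then -1 else 1

/-- Left endpoint `a_ℓ(B)` of the orbit built from the Bernoulli directions `B` (1-indexed). -/
def aEnd (B : ℕ → Bool) : ℕ → ℤ
  | 0 => 0
  | ℓ + 1 => min (aEnd B ℓ) (aEnd B ℓ + signBit (B (ℓ + 1)) * 2 ^ ℓ)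

/-- Right endpoint `b_ℓ(B)`. -/
def bEnd (B : ℕ → Bool) : ℕ → ℤ
  | 0 => 0
  | ℓ + 1 => max (bEnd B ℓ) (bEnd B ℓ + signBit (B (ℓ + 1)) * 2 ^ ℓ)

/-- Proposed extension endpoint `ã_ℓ(B) = a_{ℓ−1}(B) + (−1)^{B_ℓ} 2^{ℓ−1}` (for `ℓ ≥ 1`). -/
def aT (B : ℕ → Bool) (ℓ : ℕ) : ℤ := aEnd B (ℓ - 1) + signBit (B ℓ) * 2 ^ (ℓ - 1)

/-- Proposed extension endpoint `b̃_ℓ(B) = b_{ℓ−1}(B) + (−1)^{B_ℓ} 2^{ℓ−1}` (for `ℓ ≥ 1`). -/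
def bT (B : ℕ → Bool) (ℓ : ℕ) : ℤ := bEnd B (ℓ - 1) + signBit (B ℓ) * 2 ^ (ℓ - 1)

/-- The binary string `β(L,a,b)`: `beta ℓ L a b i` is the `i`-th bit (1-indexed) of
`(β_i(L,a,b))_{i ∈ [1:ℓ]}`, where `[a:b]` is an interval with `b − a + 1 = 2^ℓ`. -/
def beta : ℕ → ℤ → ℤ → ℤ → ℕ → Bool
  | 0, _, _, _, _ => false
  | ℓ + 1, L, a, b, i =>
      if i = ℓ + 1 then decide (mid a b + 1 ≤ L)
      else if mid a b + 1 ≤ L then beta ℓ L (mid a b + 1) b i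
      else beta ℓ L a (mid a b) i

/-- The transformed sequence `B*(L,a,b,B)`: bits `1..ℓ` come from `β(L,a,b)`, the rest from `B`. -/
def bstar (ℓ : ℕ) (L a b : ℤ) (B : ℕ → Bool) : ℕ → Bool :=
  fun i => if 1 ≤ i ∧ i ≤ ℓ then beta ℓ L a b i else B i

/-- The domain `D`: tuples `(B, ℓ, a, b, L)` with `ℓ ∈ [1:M]`, `a = a_ℓ(B)`, `b = b_ℓ(B)`,
`a ≤ L ≤ b`. -/
def memD (M : ℕ) (B : ℕ → Bool) (ℓ : ℕ) (a b L : ℤ) : Prop :=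
  1 ≤ ℓ ∧ ℓ ≤ M ∧ a = aEnd B ℓ ∧ b = bEnd B ℓ ∧ a ≤ L ∧ L ≤ b

/-- The levels of the binary tree of subintervals of `[a:b]`: `treeLevel a b k` is the family of
intervals (coded as pairs) obtained from `[a:b]` by `k` successive halvings; with
`b − a + 1 = 2^ℓ` this is `T_{ℓ−k}([a:b])` of the paper. -/
def treeLevel (a b : ℤ) : ℕ → Set (ℤ × ℤ)
  | 0 => {(a, b)}
  | k + 1 => {p | ∃ q ∈ treeLevel a b k,
      p = (q.1, mid q.1 q.2) ∨ p = (mid q.1 q.2 + 1, q.2)}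

/-- The binary tree `T([a:b]) = ∪_{j=0}^{ℓ} T_j([a:b])` of subintervals of an interval `[a:b]`
with `b − a + 1 = 2^ℓ`. -/
def tree (ℓ : ℕ) (a b : ℤ) : Set (ℤ × ℤ) := ⋃ k ≤ ℓ, treeLevel a b k

/-! ### Leapfrog dynamics -/

/-- The state space `ℝ^d`. -/
abbrev ES (d : ℕ) := EuclideanSpace ℝ (Fin d)

/-- The momentum flip `S(θ,ρ) = (θ,−ρ)`. -/
def flipMom {d : ℕ} (p : ES d × ES d) : ES d × ES d := (p.1, -p.2)

/-- One leapfrog step of size `h` for the potential `U`. -/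
def leapfrog {d : ℕ} (U : ES d → ℝ) (h : ℝ) (p : ES d × ES d) : ES d × ES d :=
  let ρh := p.2 - (h / 2) • gradient U p.1
  let θ' := p.1 + h • ρh
  (θ', ρh - (h / 2) • gradient U θ')

/-- Integer iterates `Φ_h^i`, `i ∈ ℤ`, of the leapfrog integrator (negative iterates use the
inverse `S ∘ Φ_h ∘ S`). -/
def leapfrogIter {d : ℕ} (U : ES d → ℝ) (h : ℝ) : ℤ → ES d × ES d → ES d × ES d
  | Int.ofNat n => (leapfrog U h)^[n]
  | Int.negSucc n => (flipMom ∘ leapfrog U h ∘ flipMom)^[n + 1]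

/-- The Hamiltonian `H(θ,ρ) = U(θ) + |ρ|²/2`. -/
def Ham {d : ℕ} (U : ES d → ℝ) (p : ES d × ES d) : ℝ := U p.1 + (1 / 2) * ‖p.2‖ ^ 2

open Classical in
/-- The U-turn indicator `𝟙_Uturn(a,b,θ,ρ,h,R)` (coarse step size `hs`, fine step `hs/R`). -/
def uturnInd {d : ℕ} (U : ES d → ℝ) (hs : ℝ) (R : ℕ) (a b : ℤ) (p : ES d × ES d) : ℕ :=
  let qm := leapfrogIter U (hs / R) (R * a) p
  let qp := leapfrogIter U (hs / R) (R * b) p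
  if (inner ℝ qp.2 (qp.1 - qm.1) : ℝ) < 0 ∨ (inner ℝ qm.2 (qp.1 - qm.1) : ℝ) < 0 then 1 else 0

/-- The sub-U-turn indicator `𝟙_subUturn(a,b,θ,ρ,h,R)`, defined recursively by halving. -/
def subUturnInd {d : ℕ} (U : ES d → ℝ) (hs : ℝ) (R : ℕ) (p : ES d × ES d) (a b : ℤ) : ℕ :=
  if h : a < b then
    max (max (subUturnInd U hs R p a (mid a b)) (subUturnInd U hs R p (mid a b + 1) b))
      (uturnInd U hs R a b p)
  else 0
termination_by (b - a).toNat
decreasing_by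
  · have h1 : a ≤ mid a b := by unfold mid; omega
    have h2 : mid a b < b := by unfold mid; omega
    omega
  · have h1 : a ≤ mid a b := by unfold mid; omega
    have h2 : mid a b < b := by unfold mid; omega
    omega

/-- The number of doublings `ℓ_min(θ,ρ,B,h,R)` selected by the no-U-turn procedure with at most
`2^M` leapfrog iterates. -/
def ellMin {d : ℕ} (U : ES d → ℝ) (hs : ℝ) (R : ℕ) (M : ℕ) (B : ℕ → Bool)
    (p : ES d × ES d) : ℕ :=
  sInf ({ℓ | 1 ≤ ℓ ∧ ℓ ≤ M - 1 ∧
      (uturnInd U hs R (aEnd B ℓ) (bEnd B ℓ) p = 1 ∨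
        subUturnInd U hs R p (aT B (ℓ + 1)) (bT B (ℓ + 1)) = 1)} ∪ {M})

/-- The categorical (Boltzmann) index-selection kernel `Q(L | θ, ρ, a, b, h, R)`. -/
def Qkernel {d : ℕ} (U : ES d → ℝ) (hs : ℝ) (R : ℕ) (p : ES d × ES d)
    (a b L : ℤ) : ℝ :=
  if a ≤ L ∧ L ≤ b then
    Real.exp (-Ham U (leapfrogIter U (hs / R) (R * L) p)) /
      ∑ k ∈ Finset.Icc a b, Real.exp (-Ham U (leapfrogIter U (hs / R) (R * k) p))
  else 0

/-! ### The standard normal target -/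

/-- One leapfrog step of size `h` for the standard normal potential `U(θ) = |θ|²/2`
(for which `∇U(θ) = θ`). -/
def gaussLeapfrog {d : ℕ} (h : ℝ) (p : ES d × ES d) : ES d × ES d :=
  let ρh := p.2 - (h / 2) • p.1
  let θ' := p.1 + h • ρh
  (θ', ρh - (h / 2) • θ')

/-- Integer iterates of the standard normal leapfrog integrator. -/
def gaussLeapfrogIter {d : ℕ} (h : ℝ) : ℤ → ES d × ES d → ES d × ES d
  | Int.ofNat n => (gaussLeapfrog h)^[n]
  | Int.negSucc n => (flipMom ∘ gaussLeapfrog h ∘ flipMom)^[n + 1]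

/-- The standard normal Hamiltonian `H(θ,ρ) = (|θ|² + |ρ|²)/2`. -/
def gaussHam {d : ℕ} (p : ES d × ES d) : ℝ := (1 / 2) * (‖p.1‖ ^ 2 + ‖p.2‖ ^ 2)

/-- The modified Hamiltonian `H_h(θ,ρ) = (1 − h²/4)|θ|²/2 + |ρ|²/2` preserved by the standard
normal leapfrog integrator for `h ∈ (0,2)`. -/
def gaussHamMod {d : ℕ} (h : ℝ) (p : ES d × ES d) : ℝ :=
  (1 / 2) * (1 - h ^ 2 / 4) * ‖p.1‖ ^ 2 + (1 / 2) * ‖p.2‖ ^ 2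

end
noncomputable section Dyn
variable {d : ℕ} (U : ES d → ℝ) (h : ℝ)

lemma flipMom_involutive : Function.Involutive (flipMom (d := d)) := fun p => by
  simp [flipMom]

lemma leapfrog_left_inv (p : ES d × ES d) :
    flipMom (leapfrog U h (flipMom (leapfrog U h p))) = p := by
  obtain ⟨θ, ρ⟩ := p
  simp only [leapfrog, flipMom]
  generalize gradient U (θ + h • (ρ - (h / 2) • gradient U θ)) = w
  have k1 : -(ρ - (h / 2) • gradient U θ - (h / 2) • w) - (h / 2) • w
      = -(ρ - (h / 2) • gradient U θ) := by abel
  rw [k1]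
  have k2 : θ + h • (ρ - (h / 2) • gradient U θ) + h • -(ρ - (h / 2) • gradient U θ) = θ := by
    module
  rw [k2]
  simp only [Prod.mk.injEq, true_and]
  module

lemma leapfrog_right_inv (p : ES d × ES d) :
    leapfrog U h (flipMom (leapfrog U h (flipMom p))) = p := by
  have := leapfrog_left_inv U h (flipMom p)
  exact flipMom_involutive.injective this

/-- The leapfrog integrator as a permutation. -/
def leapfrogEquiv : Equiv.Perm (ES d × ES d) where
  toFun := leapfrog U h
  invFun := flipMom ∘ leapfrog U h ∘ flipMom
  left_inv := fun p => by simpa using leapfrog_left_inv U h p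
  right_inv := fun p => by simpa using leapfrog_right_inv U h p

lemma leapfrogIter_eq_zpow (n : ℤ) :
    leapfrogIter U h n = ⇑(leapfrogEquiv U h ^ n) := by
  cases n with
  | ofNat k =>
      rw [Int.ofNat_eq_coe, zpow_natCast]
      show (leapfrog U h)^[k] = _
      rw [← Equiv.Perm.iterate_eq_pow]
      rfl
  | negSucc k =>
      rw [zpow_negSucc, ← inv_pow]
      show (flipMom ∘ leapfrog U h ∘ flipMom)^[k+1] = _
      rw [← Equiv.Perm.iterate_eq_pow]
      rfl

lemma leapfrogIter_add (m n : ℤ) (p : ES d × ES d) :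
    leapfrogIter U h (m + n) p = leapfrogIter U h m (leapfrogIter U h n p) := by
  simp only [leapfrogIter_eq_zpow, zpow_add]
  rw [Equiv.Perm.mul_apply]
end Dyn
noncomputable section Comb
variable {d : ℕ} (U : ES d → ℝ) (hs : ℝ) (R : ℕ)

lemma uturnInd_shift (L a b : ℤ) (p : ES d × ES d) :
    uturnInd U hs R (a - L) (b - L) (leapfrogIter U (hs / R) (R * L) p)
      = uturnInd U hs R a b p := by
  have e1 : ∀ c : ℤ, leapfrogIter U (hs / R) ((R : ℤ) * (c - L))
      (leapfrogIter U (hs / R) ((R : ℤ) * L) p) = leapfrogIter U (hs / R) ((R : ℤ) * c) p := by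
    intro c
    rw [← leapfrogIter_add]
    congr 1
    ring
  simp only [uturnInd, e1]

lemma subUturnInd_unfold (p : ES d × ES d) (a b : ℤ) :
    subUturnInd U hs R p a b = if _ : a < b then
      max (max (subUturnInd U hs R p a (mid a b)) (subUturnInd U hs R p (mid a b + 1) b))
        (uturnInd U hs R a b p) else 0 := by
  conv_lhs => rw [subUturnInd]

lemma subUturnInd_shift_aux (L : ℤ) (p : ES d × ES d) :
    ∀ n : ℕ, ∀ a b : ℤ, (b - a).toNat ≤ n →
      subUturnInd U hs R (leapfrogIter U (hs / R) (R * L) p) (a - L) (b - L)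
        = subUturnInd U hs R p a b := by
  intro n
  induction n with
  | zero =>
      intro a b hab
      conv_lhs => rw [subUturnInd_unfold]
      conv_rhs => rw [subUturnInd_unfold]
      rw [dif_neg (show ¬ a - L < b - L by omega), dif_neg (show ¬ (a : ℤ) < b by omega)]
  | succ n ih =>
      intro a b hab
      conv_lhs => rw [subUturnInd_unfold]
      conv_rhs => rw [subUturnInd_unfold]
      by_cases hlt : a < b
      · have h1 : a ≤ mid a b ∧ mid a b < b := by unfold mid; omega
        rw [dif_pos hlt, dif_pos (show a - L < b - L by omega)]
        have hm : mid (a - L) (b - L) = mid a b - L := by unfold mid; omega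
        rw [hm, ih a (mid a b) (by omega),
          show mid a b - L + 1 = (mid a b + 1) - L by ring,
          ih (mid a b + 1) b (by omega), uturnInd_shift U hs R L a b p]
      · rw [dif_neg hlt, dif_neg (by omega)]

lemma subUturnInd_shift (L : ℤ) (p : ES d × ES d) (a b : ℤ) :
    subUturnInd U hs R (leapfrogIter U (hs / R) (R * L) p) (a - L) (b - L)
      = subUturnInd U hs R p a b :=
  subUturnInd_shift_aux U hs R L p (b - a).toNat a b le_rfl

lemma uturnInd_le_one (a b : ℤ) (p : ES d × ES d) : uturnInd U hs R a b p ≤ 1 := by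
  simp only [uturnInd]
  split <;> simp

lemma uturnInd_self (a : ℤ) (p : ES d × ES d) : uturnInd U hs R a a p = 0 := by
  simp [uturnInd]

lemma subUturnInd_le_one_aux (p : ES d × ES d) :
    ∀ n : ℕ, ∀ a b : ℤ, (b - a).toNat ≤ n → subUturnInd U hs R p a b ≤ 1 := by
  intro n
  induction n with
  | zero =>
      intro a b hab
      rw [subUturnInd_unfold, dif_neg (show ¬ (a : ℤ) < b by omega)]
      omega
  | succ n ih =>
      intro a b hab
      rw [subUturnInd_unfold]
      by_cases hlt : a < b
      · have h1 : a ≤ mid a b ∧ mid a b < b := by unfold mid; omega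
        rw [dif_pos hlt]
        have := ih a (mid a b) (by omega)
        have := ih (mid a b + 1) b (by omega)
        have := uturnInd_le_one U hs R a b p
        omega
      · rw [dif_neg hlt]; omega

lemma subUturnInd_le_one (p : ES d × ES d) (a b : ℤ) : subUturnInd U hs R p a b ≤ 1 :=
  subUturnInd_le_one_aux U hs R p (b - a).toNat a b le_rfl

lemma subUturnInd_self (p : ES d × ES d) (a : ℤ) : subUturnInd U hs R p a a = 0 := by
  rw [subUturnInd_unfold, dif_neg (lt_irrefl a)]

end Comb
noncomputable section Ends

lemma bEnd_eq (B : ℕ → Bool) (ℓ : ℕ) : bEnd B ℓ = aEnd B ℓ + 2 ^ ℓ - 1 := by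
  induction ℓ with
  | zero => simp [aEnd, bEnd]
  | succ ℓ ih =>
      have hpow : (2:ℤ) ^ (ℓ + 1) = 2 * 2 ^ ℓ := by ring
      have hp : (0:ℤ) < 2 ^ ℓ := by positivity
      simp only [aEnd, bEnd, hpow]
      cases hB : B (ℓ + 1) <;> simp only [signBit, if_true, if_false, Bool.false_eq_true] <;>
        · generalize (2:ℤ) ^ ℓ = P at *
          omega

lemma aEnd_congr (B C : ℕ → Bool) (ℓ : ℕ) (hBC : ∀ i, 1 ≤ i → i ≤ ℓ → B i = C i) :
    aEnd B ℓ = aEnd C ℓ := by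
  induction ℓ with
  | zero => rfl
  | succ ℓ ih =>
      simp only [aEnd]
      rw [ih (fun i h1 h2 => hBC i h1 (by omega)), hBC (ℓ + 1) (by omega) le_rfl]

lemma bEnd_congr (B C : ℕ → Bool) (ℓ : ℕ) (hBC : ∀ i, 1 ≤ i → i ≤ ℓ → B i = C i) :
    bEnd B ℓ = bEnd C ℓ := by
  induction ℓ with
  | zero => rfl
  | succ ℓ ih =>
      simp only [bEnd]
      rw [ih (fun i h1 h2 => hBC i h1 (by omega)), hBC (ℓ + 1) (by omega) le_rfl]

lemma bstar_gt (ℓ : ℕ) (L a b : ℤ) (B : ℕ → Bool) (i : ℕ) (hi : ℓ < i) :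
    bstar ℓ L a b B i = B i := by
  simp only [bstar]
  rw [if_neg (by omega)]

lemma bstar_endpoints : ∀ ℓ : ℕ, ∀ a b L : ℤ, ∀ B : ℕ → Bool,
    b = a + 2 ^ ℓ - 1 → a ≤ L → L ≤ b →
    aEnd (bstar ℓ L a b B) ℓ = a - L ∧ bEnd (bstar ℓ L a b B) ℓ = b - L := by
  intro ℓ
  induction ℓ with
  | zero =>
      intro a b L B hb h1 h2
      constructor <;> simp only [aEnd, bEnd] <;> omega
  | succ ℓ ih =>
      intro a b L B hb h1 h2
      have hpow : (2:ℤ) ^ (ℓ + 1) = 2 * 2 ^ ℓ := by ring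
      have hp : (0:ℤ) < 2 ^ ℓ := by positivity
      rw [hpow] at hb
      have hm : mid a b = a + 2 ^ ℓ - 1 := by
        unfold mid
        generalize (2:ℤ) ^ ℓ = P at *
        omega
      by_cases hL : mid a b + 1 ≤ L
      · -- L in right half [mid+1, b]
        have hbits : ∀ i, 1 ≤ i → i ≤ ℓ →
            bstar (ℓ + 1) L a b B i = bstar ℓ L (mid a b + 1) b B i := by
          intro i hi1 hi2
          simp only [bstar, beta]
          rw [if_pos (show 1 ≤ i ∧ i ≤ ℓ + 1 by omega), if_pos (show 1 ≤ i ∧ i ≤ ℓ by omega),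
            if_neg (show ¬ i = ℓ + 1 by omega), if_pos hL]
        have hrec := ih (mid a b + 1) b L B (by omega) hL h2
        have htop : bstar (ℓ + 1) L a b B (ℓ + 1) = true := by
          simp [bstar, beta, hL]
        have ha := (aEnd_congr _ _ ℓ hbits).trans hrec.1
        have hbq := (bEnd_congr _ _ ℓ hbits).trans hrec.2
        constructor
        · simp only [aEnd, htop, signBit, if_true, ha]
          generalize (2:ℤ) ^ ℓ = P at *
          omega
        · simp only [bEnd, htop, signBit, if_true, hbq]
          generalize (2:ℤ) ^ ℓ = P at *
          omega
      · -- L in left half [a, mid]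
        have hbits : ∀ i, 1 ≤ i → i ≤ ℓ →
            bstar (ℓ + 1) L a b B i = bstar ℓ L a (mid a b) B i := by
          intro i hi1 hi2
          simp only [bstar, beta]
          rw [if_pos (show 1 ≤ i ∧ i ≤ ℓ + 1 by omega), if_pos (show 1 ≤ i ∧ i ≤ ℓ by omega),
            if_neg (show ¬ i = ℓ + 1 by omega), if_neg hL]
        have hrec := ih a (mid a b) L B (by omega) h1 (by omega)
        have htop : bstar (ℓ + 1) L a b B (ℓ + 1) = false := by
          simp [bstar, beta, hL]
        have ha := (aEnd_congr _ _ ℓ hbits).trans hrec.1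
        have hbq := (bEnd_congr _ _ ℓ hbits).trans hrec.2
        constructor
        · simp only [aEnd, htop, signBit, if_false, Bool.false_eq_true, ha]
          generalize (2:ℤ) ^ ℓ = P at *
          omega
        · simp only [bEnd, htop, signBit, if_false, Bool.false_eq_true, hbq]
          generalize (2:ℤ) ^ ℓ = P at *
          omega

/-- For levels `k ≥ ℓ`, the endpoints of `Bs = bstar ℓ L a b B` are those of `B` shifted. -/
lemma ends_bstar_ge (ℓ : ℕ) (L : ℤ) (B : ℕ → Bool) (hL1 : aEnd B ℓ ≤ L) (hL2 : L ≤ bEnd B ℓ) :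
    ∀ k, ℓ ≤ k → aEnd (bstar ℓ L (aEnd B ℓ) (bEnd B ℓ) B) k = aEnd B k - L ∧
      bEnd (bstar ℓ L (aEnd B ℓ) (bEnd B ℓ) B) k = bEnd B k - L := by
  intro k hk
  induction k, hk using Nat.le_induction with
  | base =>
      exact bstar_endpoints ℓ (aEnd B ℓ) (bEnd B ℓ) L B (by rw [bEnd_eq]) hL1 hL2
  | succ k hk ih =>
      have hbit : bstar ℓ L (aEnd B ℓ) (bEnd B ℓ) B (k + 1) = B (k + 1) :=
        bstar_gt ℓ L _ _ B (k + 1) (by omega)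
      simp only [aEnd, bEnd, hbit, ih.1, ih.2]
      constructor
      · rw [show aEnd B k - L + signBit (B (k+1)) * 2 ^ k
            = (aEnd B k + signBit (B (k+1)) * 2 ^ k) - L by ring, min_sub_sub_right]
      · rw [show bEnd B k - L + signBit (B (k+1)) * 2 ^ k
            = (bEnd B k + signBit (B (k+1)) * 2 ^ k) - L by ring, max_sub_sub_right]

end Ends
noncomputable section Tree
variable {d : ℕ} (U : ES d → ℝ) (hs : ℝ) (R : ℕ)

lemma treeLevel_succ (a b : ℤ) (k : ℕ) :
    treeLevel a b (k + 1) = {p | ∃ q ∈ treeLevel a b k,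
      p = (q.1, mid q.1 q.2) ∨ p = (mid q.1 q.2 + 1, q.2)} := rfl

lemma treeLevel_split (a b : ℤ) : ∀ k : ℕ,
    treeLevel a b (k + 1) = treeLevel a (mid a b) k ∪ treeLevel (mid a b + 1) b k := by
  intro k
  induction k with
  | zero =>
      ext p
      simp only [treeLevel, Set.mem_setOf_eq, Set.mem_singleton_iff, Set.mem_union]
      constructor
      · rintro ⟨q, hq, h | h⟩ <;> subst hq <;> [left; right] <;> simpa using h
      · rintro (h | h) <;> exact ⟨(a, b), rfl, by simp [h]⟩
  | succ k ih =>
      ext p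
      rw [treeLevel_succ a b (k + 1), ih, treeLevel_succ a (mid a b) k,
        treeLevel_succ (mid a b + 1) b k]
      simp only [Set.mem_setOf_eq, Set.mem_union, or_and_right, exists_or]

lemma treeLevel_shift (L a b : ℤ) : ∀ k : ℕ, ∀ c e : ℤ,
    ((c, e) ∈ treeLevel (a - L) (b - L) k ↔ (c + L, e + L) ∈ treeLevel a b k) := by
  intro k
  induction k with
  | zero =>
      intro c e
      simp only [treeLevel, Set.mem_singleton_iff, Prod.mk.injEq]
      omega
  | succ k ih =>
      intro c e
      simp only [treeLevel, Set.mem_setOf_eq]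
      constructor
      · rintro ⟨⟨q1, q2⟩, hq, h⟩
        refine ⟨(q1 + L, q2 + L), (ih q1 q2).mp hq, ?_⟩
        have hmq : mid (q1 + L) (q2 + L) = mid q1 q2 + L := by unfold mid; omega
        rcases h with h | h <;> simp only [Prod.mk.injEq] at h ⊢ <;> [left; right] <;>
          · rw [hmq]; omega
      · rintro ⟨⟨q1, q2⟩, hq, h⟩
        refine ⟨(q1 - L, q2 - L), (ih (q1 - L) (q2 - L)).mpr (by simpa using hq), ?_⟩
        have hmq : mid (q1 - L) (q2 - L) = mid q1 q2 - L := by unfold mid; omega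
        rcases h with h | h <;> simp only [Prod.mk.injEq] at h ⊢ <;> [left; right] <;>
          · rw [hmq]; omega

/-- The sub-U-turn indicator vanishes iff the U-turn indicator vanishes on all nodes of the
corresponding binary tree. -/
lemma subUturnInd_eq_zero_iff_tree (q : ES d × ES d) : ∀ j : ℕ, ∀ c e : ℤ, e = c + 2 ^ j - 1 →
    (subUturnInd U hs R q c e = 0 ↔
      ∀ k ≤ j, ∀ x ∈ treeLevel c e k, uturnInd U hs R x.1 x.2 q = 0) := by
  intro j
  induction j with
  | zero =>
      intro c e he
      have hce : c = e := by omega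
      subst hce
      have h0 : subUturnInd U hs R q c c = 0 := subUturnInd_self U hs R q c
      simp only [h0, true_iff]
      intro k hk x hx
      interval_cases k
      simp only [treeLevel, Set.mem_singleton_iff] at hx
      subst hx
      exact uturnInd_self U hs R c q
  | succ j ih =>
      intro c e he
      have hpow : (2:ℤ) ^ (j + 1) = 2 * 2 ^ j := by ring
      have hp : (0:ℤ) < 2 ^ j := by positivity
      rw [hpow] at he
      have hm : mid c e = c + 2 ^ j - 1 := by
        unfold mid; generalize (2:ℤ) ^ j = P at *; omega
      have hlt : c < e := by generalize (2:ℤ) ^ j = P at *; omega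
      rw [subUturnInd_unfold, dif_pos hlt]
      have hL := ih c (mid c e) (by omega)
      have hR := ih (mid c e + 1) e (by generalize (2:ℤ) ^ j = P at *; omega)
      constructor
      · intro h k hk x hx
        have h1 : subUturnInd U hs R q c (mid c e) = 0 := by omega
        have h2 : subUturnInd U hs R q (mid c e + 1) e = 0 := by omega
        have h3 : uturnInd U hs R c e q = 0 := by omega
        match k with
        | 0 =>
            simp only [treeLevel, Set.mem_singleton_iff] at hx
            subst hx
            exact h3
        | k + 1 =>
            rw [treeLevel_split] at hx
            rcases hx with hx | hx
            · exact (hL.mp h1) k (by omega) x hx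
            · exact (hR.mp h2) k (by omega) x hx
      · intro h
        have h3 : uturnInd U hs R c e q = 0 := by
          have := h 0 (by omega) (c, e) (by simp [treeLevel])
          simpa using this
        have h1 : subUturnInd U hs R q c (mid c e) = 0 := by
          refine hL.mpr (fun k hk x hx => ?_)
          exact h (k + 1) (by omega) x (by rw [treeLevel_split]; exact Or.inl hx)
        have h2 : subUturnInd U hs R q (mid c e + 1) e = 0 := by
          refine hR.mpr (fun k hk x hx => ?_)
          exact h (k + 1) (by omega) x (by rw [treeLevel_split]; exact Or.inr hx)
        omega

end Tree
noncomputable section NoStop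
variable {d : ℕ} (U : ES d → ℝ) (hs : ℝ) (R : ℕ)

lemma treeLevel_zero (a b : ℤ) : treeLevel a b 0 = {(a, b)} := rfl

lemma bT_sub_aT (C : ℕ → Bool) (ℓ : ℕ) : bT C (ℓ + 1) = aT C (ℓ + 1) + 2 ^ ℓ - 1 := by
  have hbe := bEnd_eq C ℓ
  have haT : aT C (ℓ + 1) = aEnd C ℓ + signBit (C (ℓ + 1)) * 2 ^ ℓ := rfl
  have hbT : bT C (ℓ + 1) = bEnd C ℓ + signBit (C (ℓ + 1)) * 2 ^ ℓ := rfl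
  omega

lemma doubling_split (C : ℕ → Bool) (ℓ k : ℕ) :
    treeLevel (aEnd C (ℓ + 1)) (bEnd C (ℓ + 1)) (k + 1)
      = treeLevel (aEnd C ℓ) (bEnd C ℓ) k ∪ treeLevel (aT C (ℓ + 1)) (bT C (ℓ + 1)) k := by
  have hbe := bEnd_eq C ℓ
  have hp : (0:ℤ) < 2 ^ ℓ := by positivity
  have hsplit := treeLevel_split (aEnd C (ℓ + 1)) (bEnd C (ℓ + 1)) k
  have haT : aT C (ℓ + 1) = aEnd C ℓ + signBit (C (ℓ + 1)) * 2 ^ ℓ := rfl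
  have hbT : bT C (ℓ + 1) = bEnd C ℓ + signBit (C (ℓ + 1)) * 2 ^ ℓ := rfl
  have ha : aEnd C (ℓ + 1) = min (aEnd C ℓ) (aEnd C ℓ + signBit (C (ℓ + 1)) * 2 ^ ℓ) := rfl
  have hb : bEnd C (ℓ + 1) = max (bEnd C ℓ) (bEnd C ℓ + signBit (C (ℓ + 1)) * 2 ^ ℓ) := rfl
  cases hB : C (ℓ + 1) with
  | true =>
      rw [hB] at haT hbT ha hb
      simp only [signBit, if_true] at haT hbT ha hb
      have h1 : mid (aEnd C (ℓ + 1)) (bEnd C (ℓ + 1)) = bT C (ℓ + 1) := by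
        unfold mid
        generalize (2:ℤ) ^ ℓ = P at *
        omega
      have h2 : bT C (ℓ + 1) + 1 = aEnd C ℓ := by
        generalize (2:ℤ) ^ ℓ = P at *
        omega
      have h3 : aEnd C (ℓ + 1) = aT C (ℓ + 1) := by
        generalize (2:ℤ) ^ ℓ = P at *
        omega
      have h4 : bEnd C (ℓ + 1) = bEnd C ℓ := by
        generalize (2:ℤ) ^ ℓ = P at *
        omega
      rw [hsplit, h1, h2, h3, h4, Set.union_comm]
  | false =>
      rw [hB] at haT hbT ha hb
      simp only [signBit, Bool.false_eq_true, if_false] at haT hbT ha hb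
      have h1 : mid (aEnd C (ℓ + 1)) (bEnd C (ℓ + 1)) = bEnd C ℓ := by
        unfold mid
        generalize (2:ℤ) ^ ℓ = P at *
        omega
      have h2 : bEnd C ℓ + 1 = aT C (ℓ + 1) := by
        generalize (2:ℤ) ^ ℓ = P at *
        omega
      have h3 : aEnd C (ℓ + 1) = aEnd C ℓ := by
        generalize (2:ℤ) ^ ℓ = P at *
        omega
      have h4 : bEnd C (ℓ + 1) = bT C (ℓ + 1) := by
        generalize (2:ℤ) ^ ℓ = P at *
        omega
      rw [hsplit, h1, h2, h3, h4]

/-- "No stopping before `ℓ`" is equivalent to absence of U-turns on all proper subtree nodes of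
the final interval. -/
lemma noStop_iff_tree (C : ℕ → Bool) (q : ES d × ES d) : ∀ ℓ : ℕ,
    ((∀ k, 1 ≤ k → k < ℓ → uturnInd U hs R (aEnd C k) (bEnd C k) q = 0 ∧
        subUturnInd U hs R q (aT C (k + 1)) (bT C (k + 1)) = 0) ↔
      (∀ k, 1 ≤ k → k ≤ ℓ → ∀ x ∈ treeLevel (aEnd C ℓ) (bEnd C ℓ) k,
        uturnInd U hs R x.1 x.2 q = 0)) := by
  intro ℓ
  induction ℓ with
  | zero =>
      constructor
      · intro _ k h1 h2 x hx; omega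
      · intro _ k h1 h2; omega
  | succ ℓ ih =>
      constructor
      · intro hno
        have hX : uturnInd U hs R (aEnd C ℓ) (bEnd C ℓ) q = 0 ∧
            subUturnInd U hs R q (aT C (ℓ + 1)) (bT C (ℓ + 1)) = 0 := by
          rcases Nat.eq_zero_or_pos ℓ with h0 | h0
          · subst h0
            refine ⟨uturnInd_self U hs R 0 q, ?_⟩
            rw [show aT C 1 = bT C 1 from rfl]
            exact subUturnInd_self U hs R q _
          · exact hno ℓ h0 (by omega)
        intro k h1 h2 x hx
        obtain ⟨j, rfl⟩ : ∃ j, k = j + 1 := ⟨k - 1, by omega⟩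
        rw [doubling_split] at hx
        rcases hx with hx | hx
        · rcases Nat.eq_zero_or_pos j with h0 | h0
          · subst h0
            rw [treeLevel_zero, Set.mem_singleton_iff] at hx
            subst hx
            exact hX.1
          · exact (ih.mp (fun k hk1 hk2 => hno k hk1 (by omega))) j h0 (by omega) x hx
        · exact (subUturnInd_eq_zero_iff_tree U hs R q ℓ (aT C (ℓ + 1)) (bT C (ℓ + 1))
            (by have := bT_sub_aT C ℓ; omega)).mp hX.2 j (by omega) x hx
      · intro htree k h1 h2
        have hRHS : ∀ j, 1 ≤ j → j ≤ ℓ → ∀ x ∈ treeLevel (aEnd C ℓ) (bEnd C ℓ) j,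
            uturnInd U hs R x.1 x.2 q = 0 := fun j hj1 hj2 x hx =>
          htree (j + 1) (by omega) (by omega) x (by rw [doubling_split]; exact Or.inl hx)
        rcases Nat.lt_or_ge k ℓ with hk | hk
        · exact ih.mpr hRHS k h1 hk
        · have hkℓ : k = ℓ := by omega
          subst hkℓ
          constructor
          · have := htree 1 (by omega) (by omega) (aEnd C k, bEnd C k)
              (by rw [doubling_split]; exact Or.inl rfl)
            simpa using this
          · refine (subUturnInd_eq_zero_iff_tree U hs R q k (aT C (k + 1)) (bT C (k + 1))
              (by have := bT_sub_aT C k; omega)).mpr (fun j hj x hx => ?_)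
            exact htree (j + 1) (by omega) (by omega) x (by rw [doubling_split]; exact Or.inr hx)

end NoStop
lemma nat_sInf_eq_iff {S : Set ℕ} {n : ℕ} (hne : S.Nonempty) :
    sInf S = n ↔ n ∈ S ∧ ∀ k, k < n → k ∉ S := by
  constructor
  · rintro rfl
    exact ⟨Nat.sInf_mem hne, fun k hk => Nat.notMem_of_lt_sInf hk⟩
  · rintro ⟨hn, hlt⟩
    have h1 := Nat.sInf_le hn
    rcases Nat.lt_or_ge (sInf S) n with h | h
    · exact absurd (Nat.sInf_mem hne) (hlt _ h)
    · omega


/-- Symmetry of the no-U-turn orbit-selection distribution: for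
`(B,ℓ,a,b,L) ∈ D`, `B* = B*(L,a,b,B)` and `p' = Φ_{h/R}^{RL}(θ,ρ)`,
`P(a,b,ℓ | θ,ρ,B,h,R) = P(a−L, b−L, ℓ | p', B*, h, R)`; that is, `(ℓ = ℓ_min(θ,ρ,B,h,R)` and
`a = a_ℓ(B)` and `b = b_ℓ(B))` iff `(ℓ = ℓ_min(p',B*,h,R)` and `a−L = a_ℓ(B*)` and
`b−L = b_ℓ(B*))`. -/
theorem orbit_selection_symmetry {d : ℕ} (U : ES d → ℝ) (hU : ContDiff ℝ 1 U)
    (hs : ℝ) (hhs : 0 < hs) (R : ℕ) (hR : 1 ≤ R) (M ℓ : ℕ) (B : ℕ → Bool) (a b L : ℤ)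
    (hD : memD M B ℓ a b L) (p : ES d × ES d)
    (Bs : ℕ → Bool) (hBs : Bs = bstar ℓ L a b B)
    (p' : ES d × ES d) (hp' : p' = leapfrogIter U (hs / R) (R * L) p) :
    (ℓ = ellMin U hs R M B p ∧ a = aEnd B ℓ ∧ b = bEnd B ℓ) ↔
      (ℓ = ellMin U hs R M Bs p' ∧ a - L = aEnd Bs ℓ ∧ b - L = bEnd Bs ℓ) := by
  obtain ⟨hℓ1, hℓM, hae, hbe, hL1, hL2⟩ := hD
  have hends : ∀ k, ℓ ≤ k → aEnd Bs k = aEnd B k - L ∧ bEnd Bs k = bEnd B k - L := by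
    intro k hk
    rw [hBs, hae, hbe]
    exact ends_bstar_ge ℓ L B (hae ▸ hL1) (hbe ▸ hL2) k hk
  have haBs : aEnd Bs ℓ = a - L := by rw [(hends ℓ le_rfl).1, ← hae]
  have hbBs : bEnd Bs ℓ = b - L := by rw [(hends ℓ le_rfl).2, ← hbe]
  have hut : ∀ c e : ℤ, uturnInd U hs R (c - L) (e - L) p' = uturnInd U hs R c e p := by
    intro c e; rw [hp']; exact uturnInd_shift U hs R L c e p
  have hsub : ∀ c e : ℤ, subUturnInd U hs R p' (c - L) (e - L) = subUturnInd U hs R p c e := by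
    intro c e; rw [hp']; exact subUturnInd_shift U hs R L p c e
  -- stopping conditions at levels `k ≥ ℓ` agree
  have hstop : ∀ k, ℓ ≤ k →
      ((uturnInd U hs R (aEnd Bs k) (bEnd Bs k) p' = 1 ∨
        subUturnInd U hs R p' (aT Bs (k + 1)) (bT Bs (k + 1)) = 1)
       ↔ (uturnInd U hs R (aEnd B k) (bEnd B k) p = 1 ∨
        subUturnInd U hs R p (aT B (k + 1)) (bT B (k + 1)) = 1)) := by
    intro k hk
    have h1 := (hends k hk).1
    have h2 := (hends k hk).2
    have hbit : Bs (k + 1) = B (k + 1) := by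
      rw [hBs]; exact bstar_gt ℓ L a b B (k + 1) (by omega)
    have haT : aT Bs (k + 1) = aT B (k + 1) - L := by
      show aEnd Bs k + signBit (Bs (k + 1)) * 2 ^ k
        = (aEnd B k + signBit (B (k + 1)) * 2 ^ k) - L
      rw [h1, hbit]; ring
    have hbT : bT Bs (k + 1) = bT B (k + 1) - L := by
      show bEnd Bs k + signBit (Bs (k + 1)) * 2 ^ k
        = (bEnd B k + signBit (B (k + 1)) * 2 ^ k) - L
      rw [h2, hbit]; ring
    rw [h1, h2, haT, hbT, hut, hsub]
  -- "no stopping before ℓ" conditions agree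
  have hnostop :
      (∀ k, 1 ≤ k → k < ℓ → uturnInd U hs R (aEnd B k) (bEnd B k) p = 0 ∧
          subUturnInd U hs R p (aT B (k + 1)) (bT B (k + 1)) = 0) ↔
      (∀ k, 1 ≤ k → k < ℓ → uturnInd U hs R (aEnd Bs k) (bEnd Bs k) p' = 0 ∧
          subUturnInd U hs R p' (aT Bs (k + 1)) (bT Bs (k + 1)) = 0) := by
    rw [noStop_iff_tree U hs R B p ℓ, noStop_iff_tree U hs R Bs p' ℓ, haBs, hbBs, ← hae, ← hbe]
    constructor
    · intro H k h1 h2 x hx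
      obtain ⟨c, e⟩ := x
      have hx' : (c + L, e + L) ∈ treeLevel a b k := (treeLevel_shift L a b k c e).mp hx
      have h := H k h1 h2 (c + L, e + L) hx'
      dsimp only at h ⊢
      rw [show c = (c + L) - L by ring, show e = (e + L) - L by ring, hut]
      exact h
    · intro H k h1 h2 x hx
      obtain ⟨c, e⟩ := x
      have hx' : (c - L, e - L) ∈ treeLevel (a - L) (b - L) k :=
        (treeLevel_shift L a b k (c - L) (e - L)).mpr (by simpa using hx)
      have h := H k h1 h2 (c - L, e - L) hx'
      dsimp only at h ⊢
      rw [hut] at h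
      exact h
  -- equivalence of the selected number of doublings
  have key : ellMin U hs R M B p = ℓ ↔ ellMin U hs R M Bs p' = ℓ := by
    unfold ellMin
    rw [nat_sInf_eq_iff ⟨M, Or.inr rfl⟩, nat_sInf_eq_iff ⟨M, Or.inr rfl⟩]
    simp only [Set.mem_union, Set.mem_setOf_eq, Set.mem_singleton_iff]
    have c1 : ((1 ≤ ℓ ∧ ℓ ≤ M - 1 ∧ (uturnInd U hs R (aEnd B ℓ) (bEnd B ℓ) p = 1 ∨
          subUturnInd U hs R p (aT B (ℓ + 1)) (bT B (ℓ + 1)) = 1)) ∨ ℓ = M) ↔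
        ((1 ≤ ℓ ∧ ℓ ≤ M - 1 ∧ (uturnInd U hs R (aEnd Bs ℓ) (bEnd Bs ℓ) p' = 1 ∨
          subUturnInd U hs R p' (aT Bs (ℓ + 1)) (bT Bs (ℓ + 1)) = 1)) ∨ ℓ = M) :=
      or_congr (and_congr Iff.rfl (and_congr Iff.rfl (hstop ℓ le_rfl).symm)) Iff.rfl
    have toNoStop : ∀ (u s : ℕ → ℕ), (∀ k, u k ≤ 1) → (∀ k, s k ≤ 1) →
        ((∀ k, k < ℓ → ¬((1 ≤ k ∧ k ≤ M - 1 ∧ (u k = 1 ∨ s k = 1)) ∨ k = M)) ↔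
          (∀ k, 1 ≤ k → k < ℓ → u k = 0 ∧ s k = 0)) := by
      intro u s hu hsle
      constructor
      · intro H k h1 h2
        have := H k h2
        have hu1 := hu k
        have hs1 := hsle k
        have hkM : k ≤ M - 1 := by omega
        omega
      · intro H k h2
        have hu1 := hu k
        have hs1 := hsle k
        rcases Nat.eq_zero_or_pos k with h0 | h0
        · omega
        · have := H k h0 h2
          omega
    rw [c1]
    constructor
    · rintro ⟨hmem, hlt⟩
      refine ⟨hmem, ?_⟩
      rw [toNoStop _ _ (fun k => uturnInd_le_one U hs R _ _ p')
        (fun k => subUturnInd_le_one U hs R p' _ _)]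
      rw [← hnostop]
      rw [← toNoStop _ _ (fun k => uturnInd_le_one U hs R _ _ p)
        (fun k => subUturnInd_le_one U hs R p _ _)]
      exact hlt
    · rintro ⟨hmem, hlt⟩
      refine ⟨hmem, ?_⟩
      rw [toNoStop _ _ (fun k => uturnInd_le_one U hs R _ _ p)
        (fun k => subUturnInd_le_one U hs R p _ _)]
      rw [hnostop]
      rw [← toNoStop _ _ (fun k => uturnInd_le_one U hs R _ _ p')
        (fun k => subUturnInd_le_one U hs R p' _ _)]
      exact hlt
  constructor
  · rintro ⟨h1, -, -⟩
    exact ⟨(key.mp h1.symm).symm, haBs.symm, hbBs.symm⟩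
  · rintro ⟨h1, -, -⟩
    exact ⟨(key.mpr h1.symm).symm, hae, hbe⟩
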